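/- Let f : F_2^k → F_2 be a Boolean function of diameter k, and suppose there exists j with 1 ≤ j ≤ k such that the function g(x_1, …, x_k) := f(x_1, …, x_k) ⊕ x_j does not depend on x_j, and such that for each integer t with 1−j ≤ t ≤ k−j for which g depends on x_{j+t}, the product g(x_1, …, x_k) · g(x_{1+t}, …, x_{k+t}) is identically 0. Then for every n ≥ k the map F : F_2^n → F_2^n defined by F(x)_i = f(x_{i−j+1}, …, x_{i−j+k}) (indices modulo n) satisfies F(F(x)) = x for all x ∈ F_2^n; i.e., F is an involution. -/

import Mathlib

/-- The shift-invariant map `F : F_2^n → F_2^n` induced by a local rule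
`f : F_2^k → F_2`, namely `F(x)_i = f(x_i, x_{i+1}, …, x_{i+k-1})`
with indices taken modulo `n`. -/
def induced (k n : ℕ) (f : (Fin k → ZMod 2) → ZMod 2) :
    (ZMod n → ZMod 2) → ZMod n → ZMod 2 :=
  fun x i => f fun j => x (i + ((j : ℕ) : ZMod n))

/-- The shift-invariant map induced by `f : F_2^k → F_2` with anchor shifted by `j0`
(0-based), namely `F(x)_i = f(x_{i-j0}, x_{i-j0+1}, …, x_{i-j0+k-1})`, indices mod `n`.
For a 1-based special index `j` this is `F(x)_i = f(x_{i-j+1}, …, x_{i-j+k})`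
with `j0 = j - 1`. -/
def inducedShift (k n : ℕ) (j0 : ℕ) (f : (Fin k → ZMod 2) → ZMod 2) :
    (ZMod n → ZMod 2) → ZMod n → ZMod 2 :=
  fun x i => f fun m => x (i - (j0 : ZMod n) + ((m : ℕ) : ZMod n))

/-- A Boolean function `g` depends on the coordinate `i` if there are two inputs
differing only in coordinate `i` on which `g` takes different values. -/
def BoolDependsOn {k : ℕ} (g : (Fin k → ZMod 2) → ZMod 2) (i : Fin k) : Prop :=
  ∃ x y : Fin k → ZMod 2, (∀ j, j ≠ i → x j = y j) ∧ g x ≠ g y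

/-- The cyclic right shift on `F_2^n`. -/
def shiftR (n : ℕ) : (ZMod n → ZMod 2) → ZMod n → ZMod 2 :=
  fun x i => x (i - 1)

/-! ### Auxiliary machinery for the proof of `stmt2` -/

section Aux

variable {k : ℕ}

/-- If `g` does not depend on coordinate `i`, then it takes equal values on inputs
differing only at `i`. -/
lemma not_dependsOn_eq {g : (Fin k → ZMod 2) → ZMod 2} {i : Fin k}
    (h : ¬ BoolDependsOn g i) (x y : Fin k → ZMod 2) (hxy : ∀ j, j ≠ i → x j = y j) :
    g x = g y := by
  by_contra hne
  exact h ⟨x, y, hxy, hne⟩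

lemma eq_of_diff_indep_aux (g : (Fin k → ZMod 2) → ZMod 2) (s : Finset (Fin k)) :
    ∀ x y : Fin k → ZMod 2, (∀ m, x m ≠ y m → m ∈ s) → (∀ m ∈ s, ¬ BoolDependsOn g m) →
      g x = g y := by
  classical
  induction s using Finset.induction_on with
  | empty =>
    intro x y h _
    have hxy : x = y := funext fun m => by
      by_contra hm; exact absurd (h m hm) (Finset.notMem_empty m)
    rw [hxy]
  | @insert a s ha ih =>
    intro x y h hd
    have h1 : g x = g (Function.update x a (y a)) := by
      refine not_dependsOn_eq (hd a (Finset.mem_insert_self a s)) _ _ ?_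
      intro m hm; rw [Function.update_of_ne hm]
    rw [h1]
    refine ih _ _ ?_ ?_
    · intro m hm
      by_cases hma : m = a
      · subst hma; simp at hm
      · rw [Function.update_of_ne hma] at hm
        rcases Finset.mem_insert.mp (h m hm) with h' | h'
        · exact absurd h' hma
        · exact h'
    · intro m hm; exact hd m (Finset.mem_insert_of_mem hm)

/-- If two inputs differ only at coordinates on which `g` does not depend, then
`g` takes the same value on them. -/
lemma eq_of_diff_indep (g : (Fin k → ZMod 2) → ZMod 2) (x y : Fin k → ZMod 2)
    (h : ∀ m, x m ≠ y m → ¬ BoolDependsOn g m) : g x = g y := by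
  classical
  refine eq_of_diff_indep_aux g (Finset.univ.filter fun m => ¬ BoolDependsOn g m) x y ?_ ?_
  · intro m hm
    simp only [Finset.mem_filter, Finset.mem_univ, true_and]
    exact h m hm
  · intro m hm
    simpa using (Finset.mem_filter.mp hm).2

/-- The "perturbation" part of the local rule: `g₀ f j w = f w + w j`. -/
def g0 (f : (Fin k → ZMod 2) → ZMod 2) (j : Fin k) : (Fin k → ZMod 2) → ZMod 2 :=
  fun w => f w + w j

/-- The window of a bi-infinite sequence `z` anchored at `p` (so that coordinate `j`
of the window sits at position `p`). -/
def win (j : Fin k) (z : ℤ → ZMod 2) (p : ℤ) : Fin k → ZMod 2 :=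
  fun m => z (p - ((j : ℕ) : ℤ) + ((m : ℕ) : ℤ))

/-- One application of the induced map, on bi-infinite sequences. -/
def pert (f : (Fin k → ZMod 2) → ZMod 2) (j : Fin k) (z : ℤ → ZMod 2) : ℤ → ZMod 2 :=
  fun q => z q + g0 f j (win j z q)

lemma win_self (j : Fin k) (z : ℤ → ZMod 2) (p : ℤ) : win j z p j = z p := by
  simp [win]

section Main

variable (f : (Fin k → ZMod 2) → ZMod 2) (j : Fin k)

lemma prodLem
    (hprod : ∀ c : Fin k, BoolDependsOn (fun x => f x + x j) c →
      ∀ x : ℤ → ZMod 2,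
        (f (fun m => x ((m : ℕ) : ℤ)) + x ((j : ℕ) : ℤ)) *
          (f (fun m => x (((m : ℕ) : ℤ) + (((c : ℕ) : ℤ) - ((j : ℕ) : ℤ)))) +
            x (((j : ℕ) : ℤ) + (((c : ℕ) : ℤ) - ((j : ℕ) : ℤ)))) = 0)
    (c : Fin k) (hc : BoolDependsOn (g0 f j) c) (z : ℤ → ZMod 2) (p : ℤ) :
    g0 f j (win j z p) * g0 f j (win j z (p - ((j : ℕ) : ℤ) + ((c : ℕ) : ℤ))) = 0 := by
  have h := hprod c hc (fun q => z (p - ((j : ℕ) : ℤ) + q))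
  have e1 : (fun m : Fin k => z (p - ((j : ℕ) : ℤ) + ((m : ℕ) : ℤ))) = win j z p := rfl
  have e2 : (fun m : Fin k =>
      z (p - ((j : ℕ) : ℤ) + (((m : ℕ) : ℤ) + (((c : ℕ) : ℤ) - ((j : ℕ) : ℤ)))))
      = win j z (p - ((j : ℕ) : ℤ) + ((c : ℕ) : ℤ)) := by
    funext m
    exact congrArg z (by ring)
  have e3 : z (p - ((j : ℕ) : ℤ) + ((j : ℕ) : ℤ)) = win j z p j := by
    exact (win_self j z p).symm ▸ congrArg z (by ring)
  have e4 : z (p - ((j : ℕ) : ℤ) + (((j : ℕ) : ℤ) + (((c : ℕ) : ℤ) - ((j : ℕ) : ℤ))))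
      = win j z (p - ((j : ℕ) : ℤ) + ((c : ℕ) : ℤ)) j := by
    simp only [win]
    exact congrArg z (by ring)
  rw [e1, e2, e3, e4] at h
  exact h

variable
    (hindep : ¬ BoolDependsOn (fun x => f x + x j) j)
    (hprod : ∀ c : Fin k, BoolDependsOn (fun x => f x + x j) c →
      ∀ x : ℤ → ZMod 2,
        (f (fun m => x ((m : ℕ) : ℤ)) + x ((j : ℕ) : ℤ)) *
          (f (fun m => x (((m : ℕ) : ℤ) + (((c : ℕ) : ℤ) - ((j : ℕ) : ℤ)))) +
            x (((j : ℕ) : ℤ) + (((c : ℕ) : ℤ) - ((j : ℕ) : ℤ)))) = 0)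

include hindep hprod

/-- If the window of `z` at `p` has perturbation value 1, then at a coordinate `m`
where something flipped, either `g₀` does not depend on `m`. Hence the value is
preserved. -/
lemma claimA (z : ℤ → ZMod 2) (p : ℤ) (h1 : g0 f j (win j z p) = 1) :
    g0 f j (win j (pert f j z) p) = 1 := by
  have key : g0 f j (win j (pert f j z) p) = g0 f j (win j z p) := by
    apply eq_of_diff_indep
    intro m hm
    -- the flip at coordinate m has value g0 f j (win j z (p - j + m))
    have hflip : g0 f j (win j z (p - ((j : ℕ) : ℤ) + ((m : ℕ) : ℤ))) = 1 := by
      have : win j (pert f j z) p m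
          = win j z p m + g0 f j (win j z (p - ((j : ℕ) : ℤ) + ((m : ℕ) : ℤ))) := rfl
      rw [this] at hm
      revert hm
      generalize win j z p m = a
      generalize g0 f j (win j z (p - ((j : ℕ) : ℤ) + ((m : ℕ) : ℤ))) = b
      revert a b; decide
    intro hdep
    have h0 := prodLem f j hprod m hdep z p
    rw [h1, hflip] at h0
    exact absurd h0 (by decide)
  rw [key, h1]

lemma mainLem (z : ℤ → ZMod 2) (p : ℤ) :
    g0 f j (win j (pert f j z) p) = g0 f j (win j z p) := by
  have two : ∀ a : ZMod 2, a = 0 ∨ a = 1 := by decide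
  rcases two (g0 f j (win j z p)) with h0 | h1
  · rw [h0]
    by_contra hne
    have hy1 : g0 f j (win j (pert f j z) p) = 1 := (two _).resolve_left hne
    by_cases hall : ∀ m, win j (pert f j z) p m ≠ win j z p m → ¬ BoolDependsOn (g0 f j) m
    · have := eq_of_diff_indep (g0 f j) _ _ hall
      rw [this, h0] at hy1
      exact absurd hy1 (by decide)
    · push_neg at hall
      obtain ⟨m, hm, hdep⟩ := hall
      have hflip : g0 f j (win j z (p - ((j : ℕ) : ℤ) + ((m : ℕ) : ℤ))) = 1 := by
        have : win j (pert f j z) p m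
            = win j z p m + g0 f j (win j z (p - ((j : ℕ) : ℤ) + ((m : ℕ) : ℤ))) := rfl
        rw [this] at hm
        revert hm
        generalize win j z p m = a
        generalize g0 f j (win j z (p - ((j : ℕ) : ℤ) + ((m : ℕ) : ℤ))) = b
        revert a b; decide
      have hy2 : g0 f j (win j (pert f j z) (p - ((j : ℕ) : ℤ) + ((m : ℕ) : ℤ))) = 1 :=
        claimA f j hindep hprod z _ hflip
      have h0' := prodLem f j hprod m hdep (pert f j z) p
      rw [hy1, hy2] at h0'
      exact absurd h0' (by decide)
  · rw [h1]
    exact claimA f j hindep hprod z p h1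

end Main

end Aux

/-- under the hypotheses of Statement 1, for every `n ≥ k` the map
`F(x)_i = f(x_{i-j+1}, …, x_{i-j+k})` (1-based `j`; here `j : Fin k` is 0-based, so the
anchor shift is `j`) is an involution: `F(F(x)) = x` for all `x ∈ F_2^n`. -/
theorem stmt2 (k : ℕ) (hk : 0 < k) (f : (Fin k → ZMod 2) → ZMod 2)
    (hdiam : BoolDependsOn f ⟨0, hk⟩ ∧ BoolDependsOn f ⟨k - 1, by omega⟩)
    (j : Fin k)
    (hindep : ¬ BoolDependsOn (fun x => f x + x j) j)
    (hprod : ∀ c : Fin k, BoolDependsOn (fun x => f x + x j) c →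
      ∀ x : ℤ → ZMod 2,
        (f (fun m => x ((m : ℕ) : ℤ)) + x ((j : ℕ) : ℤ)) *
          (f (fun m => x (((m : ℕ) : ℤ) + (((c : ℕ) : ℤ) - ((j : ℕ) : ℤ)))) +
            x (((j : ℕ) : ℤ) + (((c : ℕ) : ℤ) - ((j : ℕ) : ℤ)))) = 0) :
    ∀ n, k ≤ n → ∀ x : ZMod n → ZMod 2,
      inducedShift k n (j : ℕ) f (inducedShift k n (j : ℕ) f x) = x := by
  intro n hn x
  have hn0 : 0 < n := lt_of_lt_of_le hk hn
  haveI : NeZero n := ⟨by omega⟩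
  -- lift x to a bi-infinite sequence
  set X : ℤ → ZMod 2 := fun q => x ((q : ZMod n)) with hX
  -- casting compatibility for windows
  have hwin : ∀ (y : ZMod n → ZMod 2) (p : ℤ),
      (fun m : Fin k => y ((p : ZMod n) - ((j : ℕ) : ZMod n) + ((m : ℕ) : ZMod n)))
        = win j (fun q : ℤ => y ((q : ZMod n))) p := by
    intro y p
    funext m
    apply congrArg y
    push_cast
    ring
  -- f on a window equals "value at anchor + g0", i.e. pert
  have hfwin : ∀ (z : ℤ → ZMod 2) (p : ℤ), f (win j z p) = pert f j z p := by
    intro z p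
    have : pert f j z p = z p + (f (win j z p) + win j z p j) := rfl
    rw [this, win_self]
    generalize z p = a
    generalize f (win j z p) = b
    revert a b; decide
  -- the lift of F x is pert f j X
  have hlift : ∀ p : ℤ, inducedShift k n (j : ℕ) f x ((p : ZMod n)) = pert f j X p := by
    intro p
    show f (fun m : Fin k => x ((p : ZMod n) - ((j : ℕ) : ZMod n) + ((m : ℕ) : ZMod n)))
      = pert f j X p
    rw [hwin x p]
    exact hfwin X p
  -- hence the lift of F (F x) is pert f j (pert f j X)
  have hlift2 : ∀ p : ℤ,
      inducedShift k n (j : ℕ) f (inducedShift k n (j : ℕ) f x) ((p : ZMod n))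
        = pert f j (pert f j X) p := by
    intro p
    show f (fun m : Fin k => inducedShift k n (j : ℕ) f x
        ((p : ZMod n) - ((j : ℕ) : ZMod n) + ((m : ℕ) : ZMod n)))
      = pert f j (pert f j X) p
    have e : (fun m : Fin k => inducedShift k n (j : ℕ) f x
        ((p : ZMod n) - ((j : ℕ) : ZMod n) + ((m : ℕ) : ZMod n)))
        = win j (pert f j X) p := by
      have e1 := hwin (inducedShift k n (j : ℕ) f x) p
      rw [e1]
      funext m
      simp only [win]
      exact hlift _
    rw [e]
    exact hfwin (pert f j X) p
  funext i
  obtain ⟨p, rfl⟩ := ZMod.intCast_surjective (n := n) i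
  rw [hlift2 p]
  -- pert f j (pert f j X) p = X p
  show pert f j X p + g0 f j (win j (pert f j X) p) = x ((p : ZMod n))
  rw [mainLem f j hindep hprod X p]
  show X p + g0 f j (win j X p) + g0 f j (win j X p) = X p
  generalize X p = a
  generalize g0 f j (win j X p) = b
  revert a b; decide
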